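/- Let (X, ‖·‖) be a real normed linear space, T : X → X a mapping, k ∈ (0, ∞), h ∈ [0, 1), and set λ = 1/(k+1) ∈ (0, 1). Then T is a (k, h)-enriched Bianchini mapping (i.e., ‖k(x−y) + Tx − Ty‖ ≤ h·max{‖x − Tx‖, ‖y − Ty‖} for all x, y ∈ X) if and only if the averaged mapping T_λ(x) = (1−λ)x + λT(x) is a Bianchini mapping with constant h, i.e., ‖T_λx − T_λy‖ ≤ h·max{‖x − T_λx‖, ‖y − T_λy‖} for all x, y ∈ X. -/

import Mathlib

/-- `T` is a `(k, h)`-enriched Bianchini mapping iff the averaged mapping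
`T_λ`, `λ = 1/(k+1)`, is a Bianchini mapping with constant `h`. -/
theorem enrichedBianchini_iff_averaged_bianchini
    {X : Type*} [NormedAddCommGroup X] [NormedSpace ℝ X]
    (T : X → X) (k h : ℝ) (hk : 0 < k) (hh0 : 0 ≤ h) (hh : h < 1) :
    (∀ x y : X, ‖k • (x - y) + (T x - T y)‖ ≤ h * max ‖x - T x‖ ‖y - T y‖) ↔
      (∀ x y : X,
        ‖((1 - 1 / (k + 1)) • x + (1 / (k + 1)) • T x) -
            ((1 - 1 / (k + 1)) • y + (1 / (k + 1)) • T y)‖ ≤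
          h * max ‖x - ((1 - 1 / (k + 1)) • x + (1 / (k + 1)) • T x)‖
                  ‖y - ((1 - 1 / (k + 1)) • y + (1 / (k + 1)) • T y)‖) := by
  set l : ℝ := 1 / (k + 1) with hl
  have hk1 : (0:ℝ) < k + 1 := by linarith
  have hlpos : 0 < l := by positivity
  have hlk : l * k = 1 - l := by
    rw [hl]
    field_simp
    ring
  have key1 : ∀ x y : X,
      ((1 - l) • x + l • T x) - ((1 - l) • y + l • T y)
        = l • (k • (x - y) + (T x - T y)) := by
    intro x y
    rw [smul_add, smul_smul, hlk]
    module
  have key2 : ∀ x : X, x - ((1 - l) • x + l • T x) = l • (x - T x) := by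
    intro x; module
  have hnorm : ∀ x : X, ‖x - ((1 - l) • x + l • T x)‖ = l * ‖x - T x‖ := by
    intro x
    rw [key2, norm_smul, Real.norm_eq_abs, abs_of_pos hlpos]
  constructor
  · intro H x y
    rw [key1, hnorm, hnorm, norm_smul, Real.norm_eq_abs, abs_of_pos hlpos,
      ← mul_max_of_nonneg _ _ hlpos.le, mul_left_comm]
    exact mul_le_mul_of_nonneg_left (H x y) hlpos.le
  · intro H x y
    have := H x y
    rw [key1, hnorm, hnorm, norm_smul, Real.norm_eq_abs, abs_of_pos hlpos,
      ← mul_max_of_nonneg _ _ hlpos.le, mul_left_comm] at this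
    exact le_of_mul_le_mul_left this hlpos
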